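/- Let K be a finite set, M ≥ 1 an integer and u > 0. For each i ∈ K let a_i ≥ 0, r_i ≥ 0, s_i ∈ ℝ, and let φ_i : [0,∞) → [0,∞) be continuous, nondecreasing, unbounded and of polynomial order (there exist C_i > 0, p_i > 0 with φ_i(t) ≤ C_i·(1+t)^{p_i} for all t ≥ 0). For x ∈ [0,∞)^{K×{1,…,M}} define V(x) = exp(u·∑_{i∈K}∑_{m=1}^M x_{m,i}) and G(x) = −u·∑_{i∈K}∑_{m=1}^M a_i·x_{m,i}·V(x) + ∑_{i∈K}∑_{m=1}^M φ_i(x_{m,i})·(e^{u·(r_i − x_{m,i} + s_i)} − 1)·V(x). Then there exist constants c > 0, d > 0 and a compact set R ⊆ [0,∞)^{K×{1,…,M}} such that G(x) ≤ −c·V(x) + d·𝟙_R(x) for all x ∈ [0,∞)^{K×{1,…,M}}. -/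
import Mathlib

/-- Auxiliary polynomial-vs-exponential bound:
`(1+x)^p ≤ a^p * exp(u*x)` with `a = max 1 (p/u)`. -/
private lemma aux_rpow (u p x : ℝ) (hu : 0 < u) (hp : 0 < p) (hx : 0 ≤ x) :
    (1 + x) ^ p ≤ (max 1 (p / u)) ^ p * Real.exp (u * x) := by
  set a := max 1 (p / u) with ha
  have ha1 : (1 : ℝ) ≤ a := le_max_left _ _
  have ha0 : (0 : ℝ) < a := lt_of_lt_of_le one_pos ha1
  have h1x : (0 : ℝ) < 1 + x := by linarith
  have hlog : Real.log (1 + x) ≤ x / a + Real.log a := by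
    have h2 : Real.log ((1 + x) / a) ≤ (1 + x) / a - 1 :=
      Real.log_le_sub_one_of_pos (by positivity)
    have h3 : Real.log ((1 + x) / a) = Real.log (1 + x) - Real.log a :=
      Real.log_div (ne_of_gt h1x) (ne_of_gt ha0)
    have h4 : (1 + x) / a - 1 ≤ x / a := by
      have h5 : (1 : ℝ) / a ≤ 1 := by rw [div_le_one ha0]; exact ha1
      have h6 : (1 + x) / a = x / a + 1 / a := by ring
      linarith
    linarith
  have hpa : p / a ≤ u := by
    rw [div_le_iff₀ ha0]
    have h7 : p / u ≤ a := le_max_right _ _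
    have h8 : u * (p / u) ≤ u * a := mul_le_mul_of_nonneg_left h7 hu.le
    have h9 : u * (p / u) = p := by field_simp
    linarith [mul_comm u a]
  have key : p * Real.log (1 + x) ≤ p * Real.log a + u * x := by
    have h10 : p * Real.log (1 + x) ≤ p * (x / a + Real.log a) :=
      mul_le_mul_of_nonneg_left hlog hp.le
    have h11 : p * (x / a) ≤ u * x := by
      have : p * (x / a) = (p / a) * x := by ring
      rw [this]
      exact mul_le_mul_of_nonneg_right hpa hx
    nlinarith
  calc (1 + x) ^ p = Real.exp (Real.log (1 + x) * p) := Real.rpow_def_of_pos h1x p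
    _ ≤ Real.exp (Real.log a * p + u * x) := by
        apply Real.exp_le_exp.2; nlinarith
    _ = Real.exp (Real.log a * p) * Real.exp (u * x) := Real.exp_add _ _
    _ = a ^ p * Real.exp (u * x) := by rw [← Real.rpow_def_of_pos ha0]

/- STATEMENT 8: Foster–Lyapunov drift condition for the M-replica generator of
the Galves–Löcherbach-type model applied to the exponential Lyapunov function
V(x) = exp(u·∑_{i∈K}∑_{m=1}^M x_{m,i}). -/
theorem replica_generator_foster_lyapunov
    (K : Finset ℕ) (M : ℕ) (hM : 1 ≤ M) (u : ℝ) (hu : 0 < u)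
    (a r s : ℕ → ℝ) (φ : ℕ → ℝ → ℝ)
    (ha : ∀ i ∈ K, 0 ≤ a i)
    (hr : ∀ i ∈ K, 0 ≤ r i)
    (hφ_cont : ∀ i ∈ K, ContinuousOn (φ i) (Set.Ici 0))
    (hφ_nonneg : ∀ i ∈ K, ∀ t, 0 ≤ t → 0 ≤ φ i t)
    (hφ_mono : ∀ i ∈ K, MonotoneOn (φ i) (Set.Ici 0))
    (hφ_unbdd : ∀ i ∈ K, ∀ B : ℝ, ∃ t, 0 ≤ t ∧ B ≤ φ i t)
    (hφ_poly : ∀ i ∈ K, ∃ C > (0 : ℝ), ∃ p > (0 : ℝ),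
      ∀ t, 0 ≤ t → φ i t ≤ C * (1 + t) ^ p) :
    ∃ c > (0 : ℝ), ∃ d > (0 : ℝ), ∃ R : Set ((↥K × Fin M) → ℝ),
      IsCompact R ∧
      ∀ x : (↥K × Fin M) → ℝ, (∀ q, 0 ≤ x q) →
        (-u * (∑ q : ↥K × Fin M, a q.1.1 * x q) *
            Real.exp (u * ∑ q : ↥K × Fin M, x q)
          + ∑ q : ↥K × Fin M, φ q.1.1 (x q) *
              (Real.exp (u * (r q.1.1 - x q + s q.1.1)) - 1) *
              Real.exp (u * ∑ q' : ↥K × Fin M, x q'))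
        ≤ -c * Real.exp (u * ∑ q : ↥K × Fin M, x q)
          + Set.indicator R (fun _ => d) x := by
  classical
  choose C hC p hp hpoly using hφ_poly
  -- per-coordinate upper bound for the jump term
  set Bq : ↥K × Fin M → ℝ := fun q =>
    C q.1.1 q.1.2 * Real.exp (u * (r q.1.1 + s q.1.1)) *
      (max 1 (p q.1.1 q.1.2 / u)) ^ (p q.1.1 q.1.2) with hBqdef
  have hBq_pos : ∀ q, 0 < Bq q := by
    intro q
    have h1 := hC q.1.1 q.1.2
    have h2 : (0 : ℝ) < max 1 (p q.1.1 q.1.2 / u) :=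
      lt_of_lt_of_le one_pos (le_max_left _ _)
    have h3 : (0 : ℝ) < (max 1 (p q.1.1 q.1.2 / u)) ^ (p q.1.1 q.1.2) :=
      Real.rpow_pos_of_pos h2 _
    positivity
  have hBq_bound : ∀ q : ↥K × Fin M, ∀ y : ℝ, 0 ≤ y →
      φ q.1.1 y * (Real.exp (u * (r q.1.1 - y + s q.1.1)) - 1) ≤ Bq q := by
    intro q y hy
    have hiK := q.1.2
    have hφy : 0 ≤ φ q.1.1 y := hφ_nonneg q.1.1 hiK y hy
    have hexp_split : Real.exp (u * (r q.1.1 - y + s q.1.1)) =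
        Real.exp (u * (r q.1.1 + s q.1.1)) * Real.exp (-(u * y)) := by
      rw [← Real.exp_add]; ring_nf
    have h1 : Real.exp (u * (r q.1.1 - y + s q.1.1)) - 1 ≤
        Real.exp (u * (r q.1.1 + s q.1.1)) * Real.exp (-(u * y)) := by
      rw [← hexp_split]; linarith
    have h2 : φ q.1.1 y * (Real.exp (u * (r q.1.1 - y + s q.1.1)) - 1) ≤
        φ q.1.1 y * (Real.exp (u * (r q.1.1 + s q.1.1)) * Real.exp (-(u * y))) :=
      mul_le_mul_of_nonneg_left h1 hφy
    have h3 : φ q.1.1 y ≤ C q.1.1 hiK * (1 + y) ^ (p q.1.1 hiK) :=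
      hpoly q.1.1 hiK y hy
    have h4 : (1 + y) ^ (p q.1.1 hiK) * Real.exp (-(u * y)) ≤
        (max 1 (p q.1.1 hiK / u)) ^ (p q.1.1 hiK) := by
      have h5 := aux_rpow u (p q.1.1 hiK) y hu (hp q.1.1 hiK) hy
      have h6 := mul_le_mul_of_nonneg_right h5 (Real.exp_pos (-(u * y))).le
      have h7 : Real.exp (u * y) * Real.exp (-(u * y)) = 1 := by
        rw [← Real.exp_add]; simp
      calc (1 + y) ^ (p q.1.1 hiK) * Real.exp (-(u * y))
          ≤ (max 1 (p q.1.1 hiK / u)) ^ (p q.1.1 hiK) *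
              Real.exp (u * y) * Real.exp (-(u * y)) := h6
        _ = (max 1 (p q.1.1 hiK / u)) ^ (p q.1.1 hiK) *
              (Real.exp (u * y) * Real.exp (-(u * y))) := by ring
        _ = (max 1 (p q.1.1 hiK / u)) ^ (p q.1.1 hiK) := by rw [h7, mul_one]
    have hE : (0 : ℝ) < Real.exp (u * (r q.1.1 + s q.1.1)) := Real.exp_pos _
    have he : (0 : ℝ) < Real.exp (-(u * y)) := Real.exp_pos _
    have h8 : φ q.1.1 y * (Real.exp (u * (r q.1.1 + s q.1.1)) * Real.exp (-(u * y)))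
        ≤ (C q.1.1 hiK * (1 + y) ^ (p q.1.1 hiK)) *
          (Real.exp (u * (r q.1.1 + s q.1.1)) * Real.exp (-(u * y))) :=
      mul_le_mul_of_nonneg_right h3 (mul_pos hE he).le
    have h9 : (C q.1.1 hiK * (1 + y) ^ (p q.1.1 hiK)) *
          (Real.exp (u * (r q.1.1 + s q.1.1)) * Real.exp (-(u * y)))
        = C q.1.1 hiK * Real.exp (u * (r q.1.1 + s q.1.1)) *
          ((1 + y) ^ (p q.1.1 hiK) * Real.exp (-(u * y))) := by ring
    have h10 : C q.1.1 hiK * Real.exp (u * (r q.1.1 + s q.1.1)) *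
          ((1 + y) ^ (p q.1.1 hiK) * Real.exp (-(u * y)))
        ≤ C q.1.1 hiK * Real.exp (u * (r q.1.1 + s q.1.1)) *
          (max 1 (p q.1.1 hiK / u)) ^ (p q.1.1 hiK) :=
      mul_le_mul_of_nonneg_left h4 (mul_pos (hC q.1.1 hiK) hE).le
    calc φ q.1.1 y * (Real.exp (u * (r q.1.1 - y + s q.1.1)) - 1)
        ≤ φ q.1.1 y * (Real.exp (u * (r q.1.1 + s q.1.1)) * Real.exp (-(u * y))) := h2
      _ ≤ (C q.1.1 hiK * (1 + y) ^ (p q.1.1 hiK)) *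
            (Real.exp (u * (r q.1.1 + s q.1.1)) * Real.exp (-(u * y))) := h8
      _ = _ := h9
      _ ≤ Bq q := h10
  set B : ℝ := ∑ q : ↥K × Fin M, Bq q with hBdef
  have hB0 : 0 ≤ B := Finset.sum_nonneg fun q _ => (hBq_pos q).le
  -- choose levels where φ is large
  have hub : ∀ i ∈ K, ∃ t, 0 ≤ t ∧ 2 * (B + 1) ≤ φ i t := fun i hi =>
    hφ_unbdd i hi (2 * (B + 1))
  choose t ht0 htB using hub
  -- threshold
  set Tq : ↥K × Fin M → ℝ := fun q =>
    max (t q.1.1 q.1.2) (r q.1.1 + s q.1.1 + Real.log 2 / u) with hTqdef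
  set T : ℝ := ∑ q : ↥K × Fin M, max 0 (Tq q) with hTdef
  have hT0 : 0 ≤ T := Finset.sum_nonneg fun q _ => le_max_left _ _
  have hTle : ∀ q : ↥K × Fin M, Tq q ≤ T := by
    intro q
    have h1 : max 0 (Tq q) ≤ T :=
      Finset.single_le_sum (fun q' _ => le_max_left 0 (Tq q')) (Finset.mem_univ q)
    exact le_trans (le_max_right _ _) h1
  -- the jump term is very negative beyond the threshold
  have hdown : ∀ q : ↥K × Fin M, ∀ y : ℝ, T ≤ y →
      φ q.1.1 y * (Real.exp (u * (r q.1.1 - y + s q.1.1)) - 1) ≤ -(B + 1) := by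
    intro q y hTy
    have hiK := q.1.2
    have hy0 : 0 ≤ y := le_trans hT0 hTy
    have htT : t q.1.1 hiK ≤ y :=
      le_trans (le_trans (le_max_left _ _) (hTle q)) hTy
    have hφge : 2 * (B + 1) ≤ φ q.1.1 y :=
      le_trans (htB q.1.1 hiK)
        (hφ_mono q.1.1 hiK (ht0 q.1.1 hiK) hy0 htT)
    have hxrs : r q.1.1 + s q.1.1 + Real.log 2 / u ≤ y :=
      le_trans (le_trans (le_max_right _ _) (hTle q)) hTy
    have h2 : u * (Real.log 2 / u) = Real.log 2 := by field_simp
    have harg : u * (r q.1.1 - y + s q.1.1) ≤ -Real.log 2 := by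
      have h1 := mul_le_mul_of_nonneg_left hxrs hu.le
      nlinarith
    have hexp : Real.exp (u * (r q.1.1 - y + s q.1.1)) ≤ 1 / 2 := by
      calc Real.exp (u * (r q.1.1 - y + s q.1.1))
          ≤ Real.exp (-Real.log 2) := Real.exp_le_exp.2 harg
        _ = 1 / 2 := by
            rw [Real.exp_neg, Real.exp_log (by norm_num : (0:ℝ) < 2)]
            norm_num
    have hφ0 : 0 ≤ φ q.1.1 y := hφ_nonneg q.1.1 hiK y hy0
    have h3 : φ q.1.1 y * (Real.exp (u * (r q.1.1 - y + s q.1.1)) - 1) ≤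
        φ q.1.1 y * (-(1 / 2)) :=
      mul_le_mul_of_nonneg_left (by linarith) hφ0
    nlinarith
  -- collect the answer
  refine ⟨1, one_pos,
    (B + 1) * Real.exp (u * (Fintype.card (↥K × Fin M)) * T), by positivity,
    Set.univ.pi (fun _ : ↥K × Fin M => Set.Icc (0 : ℝ) T),
    isCompact_univ_pi (fun _ => isCompact_Icc), ?_⟩
  intro x hx
  set V := Real.exp (u * ∑ q' : ↥K × Fin M, x q') with hVdef
  have hV_pos : 0 < V := Real.exp_pos _
  have hdrift : 0 ≤ u * (∑ q : ↥K × Fin M, a q.1.1 * x q) * V :=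
    mul_nonneg (mul_nonneg hu.le (Finset.sum_nonneg fun q _ =>
      mul_nonneg (ha q.1.1 q.1.2) (hx q))) hV_pos.le
  rw [← Finset.sum_mul]
  set S : ℝ := ∑ q : ↥K × Fin M,
    φ q.1.1 (x q) * (Real.exp (u * (r q.1.1 - x q + s q.1.1)) - 1) with hSdef
  by_cases hmem : x ∈ Set.univ.pi (fun _ : ↥K × Fin M => Set.Icc (0 : ℝ) T)
  · rw [Set.indicator_of_mem hmem]
    have hSB : S ≤ B :=
      Finset.sum_le_sum fun q _ => hBq_bound q (x q) (hx q)
    have hsum : ∑ q' : ↥K × Fin M, x q' ≤ (Fintype.card (↥K × Fin M)) * T := by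
      calc ∑ q' : ↥K × Fin M, x q'
          ≤ Finset.univ.card • T :=
            Finset.sum_le_card_nsmul _ _ _
              (fun q _ => (hmem q (Set.mem_univ q)).2)
        _ = (Fintype.card (↥K × Fin M)) * T := by
            simp [nsmul_eq_mul, Finset.card_univ]
    have hVle : V ≤ Real.exp (u * (Fintype.card (↥K × Fin M)) * T) := by
      rw [hVdef]
      apply Real.exp_le_exp.2
      have := mul_le_mul_of_nonneg_left hsum hu.le
      nlinarith
    have h1 : S * V ≤ B * V := mul_le_mul_of_nonneg_right hSB hV_pos.le
    have h2 : (B + 1) * V ≤ (B + 1) * Real.exp (u * (Fintype.card (↥K × Fin M)) * T) :=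
      mul_le_mul_of_nonneg_left hVle (by positivity)
    nlinarith
  · rw [Set.indicator_of_notMem hmem]
    obtain ⟨q0, hq0⟩ : ∃ q0 : ↥K × Fin M, T < x q0 := by
      by_contra h
      push_neg at h
      exact hmem fun q _ => ⟨hx q, h q⟩
    have hS_le : S ≤ -1 := by
      have hhead := hdown q0 (x q0) hq0.le
      have hsplit : φ q0.1.1 (x q0) *
            (Real.exp (u * (r q0.1.1 - x q0 + s q0.1.1)) - 1)
          + ∑ q ∈ Finset.univ.erase q0,
              φ q.1.1 (x q) * (Real.exp (u * (r q.1.1 - x q + s q.1.1)) - 1) = S := by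
        rw [hSdef]
        exact Finset.add_sum_erase Finset.univ
          (fun q => φ q.1.1 (x q) * (Real.exp (u * (r q.1.1 - x q + s q.1.1)) - 1))
          (Finset.mem_univ q0)
      have htail : ∑ q ∈ Finset.univ.erase q0,
            φ q.1.1 (x q) * (Real.exp (u * (r q.1.1 - x q + s q.1.1)) - 1)
          ≤ ∑ q ∈ Finset.univ.erase q0, Bq q :=
        Finset.sum_le_sum fun q _ => hBq_bound q (x q) (hx q)
      have htail2 : ∑ q ∈ Finset.univ.erase q0, Bq q ≤ B :=
        Finset.sum_le_sum_of_subset_of_nonneg (Finset.subset_univ _)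
          (fun q _ _ => (hBq_pos q).le)
      linarith
    have h1 : S * V ≤ (-1) * V := mul_le_mul_of_nonneg_right hS_le hV_pos.le
    linarith
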